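/- Let φ : [a,b] → ℝ be C¹ with φ(a) = 0 and φ' > 0, let ϕ : [0,∞) → [0,∞) be convex and increasing with ϕ(0)=0, and let f : [a,b] → ℝ be C¹ with f(a)=0. Then for every x ∈ [a,b] with φ(x) > 0, ϕ(|f(x)|/φ(x)) ≤ (1/φ(x)) ∫ₐˣ φ'(t) ϕ(|f'(t)|/φ'(t)) dt. -/

import Mathlib

open Set

lemma exists_subgradient (ϕ : ℝ → ℝ) (hconv : ConvexOn ℝ (Set.Ici (0:ℝ)) ϕ)
    (hmono : MonotoneOn ϕ (Set.Ici (0:ℝ))) {c : ℝ} (hc : 0 ≤ c) :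
    ∃ m : ℝ, 0 ≤ m ∧ ∀ y, 0 ≤ y → ϕ c + m * (y - c) ≤ ϕ y := by
  rcases hc.eq_or_lt with h0 | hpos
  · refine ⟨0, le_rfl, fun y hy => ?_⟩
    have := hmono (self_mem_Ici) (mem_Ici.2 hy) hy
    simpa [← h0] using this
  · have hcmem : c ∈ Set.Ici (0:ℝ) := le_of_lt hpos
    have hslope := hconv.slope_mono hcmem
    set S : Set ℝ := slope ϕ c '' Set.Ioo 0 c with hSdef
    have hmem : ∀ z ∈ Set.Ioo (0:ℝ) c, z ∈ Set.Ici (0:ℝ) \ {c} :=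
      fun z hz => ⟨le_of_lt hz.1, fun h => absurd (h ▸ hz.2) (lt_irrefl _)⟩
    have hc1 : c + 1 ∈ Set.Ici (0:ℝ) \ {c} := by
      refine ⟨by simp; linarith, ?_⟩
      intro h
      rw [Set.mem_singleton_iff] at h
      linarith
    have hbdd : BddAbove S := by
      refine ⟨slope ϕ c (c + 1), fun v hv => ?_⟩
      obtain ⟨z, hz, rfl⟩ := hv
      exact hslope (hmem z hz) hc1 (by linarith [hz.2])
    have hc2 : c / 2 ∈ Set.Ioo (0:ℝ) c := ⟨by linarith, by linarith⟩
    have hne : S.Nonempty := ⟨_, Set.mem_image_of_mem _ hc2⟩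
    set m := sSup S with hm
    have hle : slope ϕ c (c/2) ≤ m := le_csSup hbdd (Set.mem_image_of_mem _ hc2)
    have hslope_nonneg : 0 ≤ slope ϕ c (c/2) := by
      have hϕle : ϕ (c/2) ≤ ϕ c := hmono (le_of_lt hc2.1) hcmem (by linarith)
      rw [slope_def_field]
      exact div_nonneg_iff.2 (Or.inr ⟨by linarith, by linarith⟩)
    refine ⟨m, le_trans hslope_nonneg hle, fun y hy => ?_⟩
    rcases lt_trichotomy y c with hyc | rfl | hyc
    · have hmy : slope ϕ c y ≤ m := by
        rcases eq_or_lt_of_le hy with rfl | hy0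
        · have h0mem : (0:ℝ) ∈ Set.Ici (0:ℝ) \ {c} := by
            refine ⟨Set.self_mem_Ici, ?_⟩
            intro h
            rw [Set.mem_singleton_iff] at h
            linarith
          refine le_trans (hslope h0mem
            (hmem _ hc2) (by linarith)) hle
        · exact le_csSup hbdd (Set.mem_image_of_mem _ ⟨hy0, hyc⟩)
      have h1 : m * (y - c) ≤ slope ϕ c y * (y - c) :=
        mul_le_mul_of_nonpos_right hmy (by linarith)
      have h2 : slope ϕ c y * (y - c) = ϕ y - ϕ c := by
        rw [slope_def_field, div_mul_cancel₀ _ (sub_ne_zero.2 (ne_of_lt hyc))]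
      linarith
    · simp
    · have hmy : m ≤ slope ϕ c y := by
        refine csSup_le hne fun v hv => ?_
        obtain ⟨z, hz, rfl⟩ := hv
        have hymem : y ∈ Set.Ici (0:ℝ) \ {c} := by
          refine ⟨hy, ?_⟩
          intro h
          rw [Set.mem_singleton_iff] at h
          linarith
        exact hslope (hmem z hz) hymem (by linarith [hz.2])
      have h1 : m * (y - c) ≤ slope ϕ c y * (y - c) :=
        mul_le_mul_of_nonneg_right hmy (by linarith)
      have h2 : slope ϕ c y * (y - c) = ϕ y - ϕ c := by
        rw [slope_def_field, div_mul_cancel₀ _ (sub_ne_zero.2 (ne_of_gt hyc))]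
      linarith
theorem jensen_key_inequality (a b : ℝ) (hab : a < b)
    (φ φ' : ℝ → ℝ)
    (hφ : ∀ x ∈ Set.Icc a b, HasDerivAt φ (φ' x) x)
    (hφ'cont : ContinuousOn φ' (Set.Icc a b))
    (hφa : φ a = 0)
    (hφ'pos : ∀ x ∈ Set.Icc a b, 0 < φ' x)
    (ϕ : ℝ → ℝ)
    (hϕconv : ConvexOn ℝ (Set.Ici (0 : ℝ)) ϕ)
    (hϕmono : MonotoneOn ϕ (Set.Ici (0 : ℝ)))
    (hϕ0 : ϕ 0 = 0)
    (f f' : ℝ → ℝ)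
    (hf : ∀ x ∈ Set.Icc a b, HasDerivAt f (f' x) x)
    (hf'cont : ContinuousOn f' (Set.Icc a b))
    (hfa : f a = 0) :
    ∀ x ∈ Set.Icc a b, 0 < φ x →
      ϕ (|f x| / φ x) ≤ (1 / φ x) * ∫ t in a..x, φ' t * ϕ (|f' t| / φ' t) := by
  intro x hx hφx
  obtain ⟨hax', hxb⟩ := hx
  have hax : a < x := by
    rcases hax'.lt_or_eq with h | h
    · exact h
    · exact absurd hφx (by rw [← h, hφa]; exact lt_irrefl 0)
  have hsub : Set.Icc a x ⊆ Set.Icc a b := Set.Icc_subset_Icc le_rfl hxb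
  have huIcc : Set.uIcc a x = Set.Icc a x := Set.uIcc_of_le hax.le
  -- continuity facts restricted to [a,x]
  have hφ'c : ContinuousOn φ' (Set.Icc a x) := hφ'cont.mono hsub
  have hf'c : ContinuousOn f' (Set.Icc a x) := hf'cont.mono hsub
  have hφ'int : IntervalIntegrable φ' MeasureTheory.volume a x :=
    (hφ'c.mono (le_of_eq huIcc)).intervalIntegrable
  have hf'int : IntervalIntegrable f' MeasureTheory.volume a x :=
    (hf'c.mono (le_of_eq huIcc)).intervalIntegrable
  have habs_int : IntervalIntegrable (fun t => |f' t|) MeasureTheory.volume a x :=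
    ((hf'c.mono (le_of_eq huIcc)).abs).intervalIntegrable
  -- FTC identities
  have hφeq : ∫ t in a..x, φ' t = φ x := by
    have := intervalIntegral.integral_eq_sub_of_hasDerivAt
      (fun t ht => hφ t (hsub (huIcc ▸ ht))) hφ'int
    rw [this, hφa, sub_zero]
  have hfeq : ∫ t in a..x, f' t = f x := by
    have := intervalIntegral.integral_eq_sub_of_hasDerivAt
      (fun t ht => hf t (hsub (huIcc ▸ ht))) hf'int
    rw [this, hfa, sub_zero]
  have habs : |f x| ≤ ∫ t in a..x, |f' t| := by
    rw [← hfeq]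
    exact intervalIntegral.abs_integral_le_integral_abs hax.le
  set c : ℝ := |f x| / φ x with hc_def
  have hc : 0 ≤ c := div_nonneg (abs_nonneg _) hφx.le
  have hcφ : c * φ x = |f x| := div_mul_cancel₀ _ (ne_of_gt hφx)
  obtain ⟨m, hm0, hm⟩ := exists_subgradient ϕ hϕconv hϕmono hc
  -- the lower affine function
  set L : ℝ → ℝ := fun t => (ϕ c - m * c) * φ' t + m * |f' t| with hL_def
  have hLint : IntervalIntegrable L MeasureTheory.volume a x :=
    (hφ'int.const_mul _).add (habs_int.const_mul _)
  -- nonnegativity of g on [a,b]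
  have hg_nonneg : ∀ t ∈ Set.Icc a b, 0 ≤ |f' t| / φ' t :=
    fun t ht => div_nonneg (abs_nonneg _) (hφ'pos t ht).le
  -- pointwise inequality on [a,x]
  have hpt : ∀ t ∈ Set.Icc a x, L t ≤ φ' t * ϕ (|f' t| / φ' t) := by
    intro t ht
    have htb := hsub ht
    have hφ't := hφ'pos t htb
    have key : ϕ c + m * (|f' t| / φ' t - c) ≤ ϕ (|f' t| / φ' t) :=
      hm _ (hg_nonneg t htb)
    have hmul : φ' t * (ϕ c + m * (|f' t| / φ' t - c)) ≤ φ' t * ϕ (|f' t| / φ' t) :=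
      mul_le_mul_of_nonneg_left key hφ't.le
    have hrw : φ' t * (ϕ c + m * (|f' t| / φ' t - c)) = L t := by
      rw [hL_def]
      field_simp
      ring
    linarith [hmul, hrw ▸ hmul]
  -- integrability of the RHS integrand
  have hRint : IntervalIntegrable (fun t => φ' t * ϕ (|f' t| / φ' t))
      MeasureTheory.volume a x := by
    rw [intervalIntegrable_iff, Set.uIoc_of_le hax.le]
    have hIoc : Set.Ioc a x ⊆ Set.Icc a b := fun t ht => hsub ⟨ht.1.le, ht.2⟩
    -- monotone extension of ϕ
    have hmonoext : Monotone (fun y => ϕ (max y 0)) := fun y z hyz =>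
      hϕmono (le_max_right y 0) (le_max_right z 0) (max_le_max hyz le_rfl)
    have hmeasext : Measurable (fun y => ϕ (max y 0)) := hmonoext.measurable
    have hgcont : ContinuousOn (fun t => |f' t| / φ' t) (Set.Icc a b) :=
      hf'cont.abs.div hφ'cont (fun t ht => ne_of_gt (hφ'pos t ht))
    have hφ'aem : AEMeasurable φ'
        (MeasureTheory.volume.restrict (Set.Ioc a x)) :=
      (hφ'cont.mono hIoc).aemeasurable measurableSet_Ioc
    have hgaem : AEMeasurable (fun t => |f' t| / φ' t)
        (MeasureTheory.volume.restrict (Set.Ioc a x)) :=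
      (hgcont.mono hIoc).aemeasurable measurableSet_Ioc
    have haem : AEMeasurable (fun t => φ' t * ϕ (max (|f' t| / φ' t) 0))
        (MeasureTheory.volume.restrict (Set.Ioc a x)) :=
      hφ'aem.mul (hmeasext.comp_aemeasurable hgaem)
    -- bounds
    obtain ⟨Mφ, hMφ⟩ := (isCompact_Icc).exists_bound_of_continuousOn hφ'c
    obtain ⟨Mg, hMg⟩ := (isCompact_Icc).exists_bound_of_continuousOn (hgcont.mono hsub)
    have hMφ0 : 0 ≤ Mφ := le_trans (norm_nonneg _) (hMφ a (Set.left_mem_Icc.2 hax.le))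
    set B : ℝ := ϕ (max Mg 0) with hB_def
    have hB0 : 0 ≤ B := by
      have h := hϕmono Set.self_mem_Ici (le_max_right Mg 0) (le_max_right Mg 0)
      rw [hϕ0] at h
      exact h
    have hbound : ∀ t ∈ Set.Ioc a x,
        ‖φ' t * ϕ (max (|f' t| / φ' t) 0)‖ ≤ Mφ * B := by
      intro t ht
      have htx : t ∈ Set.Icc a x := ⟨ht.1.le, ht.2⟩
      have htb := hsub htx
      have h1 : ‖φ' t‖ ≤ Mφ := hMφ t htx
      have hϕval0 : 0 ≤ ϕ (max (|f' t| / φ' t) 0) := by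
        have h := hϕmono Set.self_mem_Ici (le_max_right (|f' t| / φ' t) 0)
          (le_max_right (|f' t| / φ' t) 0)
        rw [hϕ0] at h
        exact h
      have hϕvalB : ϕ (max (|f' t| / φ' t) 0) ≤ B := by
        rw [hB_def]
        refine hϕmono (Set.mem_Ici.2 (le_max_right _ _)) (Set.mem_Ici.2 (le_max_right _ _)) (max_le_max ?_ le_rfl)
        calc |f' t| / φ' t ≤ ‖|f' t| / φ' t‖ := le_abs_self _
          _ ≤ Mg := hMg t htx
      rw [norm_mul]
      have h2 : ‖ϕ (max (|f' t| / φ' t) 0)‖ ≤ B := by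
        rw [Real.norm_eq_abs, abs_of_nonneg hϕval0]; exact hϕvalB
      exact mul_le_mul h1 h2 (norm_nonneg _) hMφ0
    have hfin : MeasureTheory.HasFiniteIntegral
        (fun t => φ' t * ϕ (max (|f' t| / φ' t) 0))
        (MeasureTheory.volume.restrict (Set.Ioc a x)) := by
      refine MeasureTheory.HasFiniteIntegral.restrict_of_bounded (C := Mφ * B)
        (measure_Ioc_lt_top) ?_
      exact (MeasureTheory.ae_restrict_mem measurableSet_Ioc).mono hbound
    have hint : MeasureTheory.IntegrableOn
        (fun t => φ' t * ϕ (max (|f' t| / φ' t) 0)) (Set.Ioc a x) :=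
      ⟨haem.aestronglyMeasurable, hfin⟩
    refine hint.congr_fun ?_ measurableSet_Ioc
    intro t ht
    have := hg_nonneg t (hIoc ht)
    simp [max_eq_left this]
  -- compare integrals
  have hint_mono : ∫ t in a..x, L t ≤ ∫ t in a..x, φ' t * ϕ (|f' t| / φ' t) :=
    intervalIntegral.integral_mono_on hax.le hLint hRint hpt
  have hLcalc : ∫ t in a..x, L t
      = (ϕ c - m * c) * φ x + m * ∫ t in a..x, |f' t| := by
    rw [hL_def]
    rw [intervalIntegral.integral_add (hφ'int.const_mul _) (habs_int.const_mul _),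
      intervalIntegral.integral_const_mul, intervalIntegral.integral_const_mul, hφeq]
  have hchain : ϕ c * φ x ≤ ∫ t in a..x, φ' t * ϕ (|f' t| / φ' t) := by
    have h1 : ϕ c * φ x = (ϕ c - m * c) * φ x + m * |f x| := by
      rw [← hcφ]; ring
    have h2 : m * |f x| ≤ m * ∫ t in a..x, |f' t| :=
      mul_le_mul_of_nonneg_left habs hm0
    calc ϕ c * φ x = (ϕ c - m * c) * φ x + m * |f x| := h1
      _ ≤ (ϕ c - m * c) * φ x + m * ∫ t in a..x, |f' t| := by linarith
      _ = ∫ t in a..x, L t := hLcalc.symm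
      _ ≤ _ := hint_mono
  rw [one_div, ← div_eq_inv_mul]
  exact (le_div_iff₀ hφx).2 hchain
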